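/- Let α > 0, let K be a compact subset of a dyadic cube Q₀ in R^d, and let {Q_j} be a Whitney decomposition of K^c. For a dyadic cube Q ⊆ Q₀ define λ(Q) = Σ_{Q_j ⊆ Q} (ℓ(Q_j)/ℓ(Q))^{d+α}. Then λ(Q) ≤ |Q \ K| / |Q| ≤ 1 for all Q ⊆ Q₀, and Σ_{Q ⊆ Q₀, Q dyadic} λ(Q) |Q| ≤ |Q₀ \ K| / (1 − 2^{-α}). -/

import Mathlib

open MeasureTheory Metric Set ENNReal

/-- The axis-parallel cube with corner `a` and side length `l`. -/
def cube {d : ℕ} (a : Fin d → ℝ) (l : ℝ) : Set (Fin d → ℝ) :=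
  Set.Icc a (fun i => a i + l)

/-- The concentric dilate `MQ` of the cube with corner `a` and side `l`. -/
def cubeDilate {d : ℕ} (a : Fin d → ℝ) (l M : ℝ) : Set (Fin d → ℝ) :=
  cube (fun i => a i + l / 2 - M * l / 2) (M * l)

/-- The dyadic cube with index `p = (n, j)`. -/
def dc {d : ℕ} (p : ℤ × (Fin d → ℤ)) : Set (Fin d → ℝ) :=
  cube (fun i => (2 : ℝ) ^ p.1 * (p.2 i : ℝ)) ((2 : ℝ) ^ p.1)

/-- The concentric dilate `M·Q` of the dyadic cube with index `p`. -/
def dcDilate {d : ℕ} (p : ℤ × (Fin d → ℤ)) (M : ℝ) : Set (Fin d → ℝ) :=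
  cubeDilate (fun i => (2 : ℝ) ^ p.1 * (p.2 i : ℝ)) ((2 : ℝ) ^ p.1) M

/-- `p` indexes a Whitney cube for `K`: a maximal dyadic cube `Q ⊆ Kᶜ` with `3Q ∩ K = ∅`. -/
def IsWhitneyFor {d : ℕ} (K : Set (Fin d → ℝ)) (p : ℤ × (Fin d → ℤ)) : Prop :=
  (dc p ⊆ Kᶜ ∧ dcDilate p 3 ∩ K = ∅) ∧
  ∀ p' : ℤ × (Fin d → ℤ), dc p ⊂ dc p' → ¬(dc p' ⊆ Kᶜ ∧ dcDilate p' 3 ∩ K = ∅)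

/-- `λ(Q) = Σ_{Q_j ⊆ Q} (ℓ(Q_j)/ℓ(Q))^{d+α}`, summed over Whitney cubes `Q_j ⊆ Q` of `Kᶜ`. -/
noncomputable def lamK {d : ℕ} (K : Set (Fin d → ℝ)) (α : ℝ) (Q : ℤ × (Fin d → ℤ)) : ℝ≥0∞ :=
  ∑' p : {p : ℤ × (Fin d → ℤ) // IsWhitneyFor K p ∧ dc p ⊆ dc Q},
    ENNReal.ofReal (((2 : ℝ) ^ p.val.1 / (2 : ℝ) ^ Q.1) ^ ((d : ℝ) + α))

namespace WGS
variable {d : ℕ}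

lemma mem_dc {p : ℤ × (Fin d → ℤ)} {x : Fin d → ℝ} :
    x ∈ dc p ↔ ∀ i, (2:ℝ)^p.1 * p.2 i ≤ x i ∧ x i ≤ (2:ℝ)^p.1 * p.2 i + (2:ℝ)^p.1 := by
  simp [dc, cube, Set.mem_Icc, Pi.le_def, forall_and]

lemma dc_subset_bounds {p q : ℤ × (Fin d → ℤ)} (h : dc p ⊆ dc q) (i : Fin d) :
    (2:ℝ)^q.1 * q.2 i ≤ (2:ℝ)^p.1 * p.2 i ∧
      (2:ℝ)^p.1 * p.2 i + (2:ℝ)^p.1 ≤ (2:ℝ)^q.1 * q.2 i + (2:ℝ)^q.1 := by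
  have h2 : (0:ℝ) ≤ (2:ℝ)^p.1 := by positivity
  have hc : (fun i => (2:ℝ)^p.1 * (p.2 i : ℝ)) ∈ dc p :=
    mem_dc.2 fun i => ⟨le_refl _, by linarith⟩
  have hc2 : (fun i => (2:ℝ)^p.1 * (p.2 i : ℝ) + (2:ℝ)^p.1) ∈ dc p :=
    mem_dc.2 fun i => ⟨by linarith, le_refl _⟩
  exact ⟨(mem_dc.1 (h hc) i).1, (mem_dc.1 (h hc2) i).2⟩

lemma scale_le (hd : 0 < d) {p q : ℤ × (Fin d → ℤ)} (h : dc p ⊆ dc q) : p.1 ≤ q.1 := by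
  obtain ⟨h1, h2⟩ := dc_subset_bounds h ⟨0, hd⟩
  have : (2:ℝ)^p.1 ≤ (2:ℝ)^q.1 := by linarith
  exact (zpow_le_zpow_iff_right₀ (by norm_num : (1:ℝ) < 2)).1 this

lemma same_scale_eq {p q q' : ℤ × (Fin d → ℤ)} (h : dc p ⊆ dc q) (h' : dc p ⊆ dc q')
    (hn : q.1 = q'.1) : q = q' := by
  have hp : (0:ℝ) < (2:ℝ)^p.1 := by positivity
  have hq : (0:ℝ) < (2:ℝ)^q.1 := by positivity
  have key : ∀ i, q.2 i = q'.2 i := by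
    intro i
    have b1 := dc_subset_bounds h i
    have b2 := dc_subset_bounds h' i
    have l1 : (2:ℝ)^q.1 * q.2 i < (2:ℝ)^q'.1 * (q'.2 i + 1) := by
      rw [← hn] at b2 ⊢; nlinarith [b1.1, b2.2]
    have l2 : (2:ℝ)^q'.1 * q'.2 i < (2:ℝ)^q.1 * (q.2 i + 1) := by
      rw [← hn] at b2 ⊢; nlinarith [b2.1, b1.2]
    rw [← hn] at l1 l2
    have i1 : (q.2 i : ℝ) < q'.2 i + 1 := by
      have := (mul_lt_mul_iff_right₀ hq).1 l1; exact_mod_cast this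
    have i2 : (q'.2 i : ℝ) < q.2 i + 1 := by
      have := (mul_lt_mul_iff_right₀ hq).1 l2; exact_mod_cast this
    have j1 : q.2 i < q'.2 i + 1 := by exact_mod_cast i1
    have j2 : q'.2 i < q.2 i + 1 := by exact_mod_cast i2
    omega
  exact Prod.ext hn (funext key)

lemma dc_inj (hd : 0 < d) {p q : ℤ × (Fin d → ℤ)} (h : dc p = dc q) : p = q := by
  have h1 : dc p ⊆ dc q := h.le
  have h2 : dc q ⊆ dc p := h.ge
  exact same_scale_eq (subset_refl (dc p)) h1 (le_antisymm (scale_le hd h1) (scale_le hd h2))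

def dcInt (p : ℤ × (Fin d → ℤ)) : Set (Fin d → ℝ) :=
  univ.pi fun i => Ioo ((2:ℝ)^p.1 * p.2 i) ((2:ℝ)^p.1 * p.2 i + (2:ℝ)^p.1)

lemma mem_dcInt {p : ℤ × (Fin d → ℤ)} {x : Fin d → ℝ} :
    x ∈ dcInt p ↔ ∀ i, (2:ℝ)^p.1 * p.2 i < x i ∧ x i < (2:ℝ)^p.1 * p.2 i + (2:ℝ)^p.1 := by
  simp [dcInt, Set.mem_pi, forall_and]

lemma dyadic_1d {m n a b : ℤ} (hmn : m ≤ n) (x : ℝ)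
    (h1 : (2:ℝ)^m * a < x) (h2 : x < (2:ℝ)^m * a + 2^m)
    (h3 : (2:ℝ)^n * b < x) (h4 : x < (2:ℝ)^n * b + 2^n) :
    (2:ℝ)^n * b ≤ (2:ℝ)^m * a ∧ (2:ℝ)^m * a + 2^m ≤ (2:ℝ)^n * b + 2^n := by
  have hm : (0:ℝ) < (2:ℝ)^m := by positivity
  obtain ⟨k, hkk⟩ : ∃ k : ℕ, (k:ℤ) = n - m := ⟨(n-m).toNat, Int.toNat_of_nonneg (by omega)⟩
  have h2n : (2:ℝ)^n = (2:ℝ)^m * (2:ℝ)^k := by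
    rw [← zpow_natCast (2:ℝ) k, ← zpow_add₀ (two_ne_zero)]
    congr 1; omega
  have t1 : (2:ℝ)^m * ((2:ℝ)^k * b) < (2:ℝ)^m * ((a:ℝ) + 1) := by
    have t := h3.trans h2; rw [h2n] at t; ring_nf at t ⊢; linarith
  have hB1 : (2:ℝ)^k * b < (a:ℝ) + 1 := (mul_lt_mul_iff_right₀ hm).1 t1
  have hB1' : 2^k * b ≤ a := by
    have h' : 2^k * b < a + 1 := by exact_mod_cast hB1
    omega
  have t2 : (2:ℝ)^m * (a:ℝ) < (2:ℝ)^m * ((2:ℝ)^k * b + (2:ℝ)^k) := by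
    have t := h1.trans h4; rw [h2n] at t; ring_nf at t ⊢; linarith
  have hA1 : (a:ℝ) < (2:ℝ)^k * b + (2:ℝ)^k := (mul_lt_mul_iff_right₀ hm).1 t2
  have hA1' : a + 1 ≤ 2^k * b + 2^k := by
    have h' : a < 2^k * b + 2^k := by exact_mod_cast hA1
    omega
  constructor
  · have : ((2^k * b : ℤ) : ℝ) ≤ (a:ℝ) := by exact_mod_cast hB1'
    push_cast at this
    rw [h2n]; nlinarith
  · have : ((a:ℝ) + 1) ≤ (2:ℝ)^k * b + (2:ℝ)^k := by exact_mod_cast hA1'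
    rw [h2n]; nlinarith

lemma dc_subset_of_int_overlap {p q : ℤ × (Fin d → ℤ)} (hpq : p.1 ≤ q.1)
    {x : Fin d → ℝ} (hx : x ∈ dcInt p) (hx' : x ∈ dcInt q) : dc p ⊆ dc q := by
  intro y hy
  rw [mem_dc] at hy ⊢
  intro i
  obtain ⟨u1, u2⟩ := mem_dcInt.1 hx i
  obtain ⟨v1, v2⟩ := mem_dcInt.1 hx' i
  obtain ⟨w1, w2⟩ := dyadic_1d hpq (x i) u1 u2 v1 v2
  obtain ⟨y1, y2⟩ := hy i
  exact ⟨by linarith, by linarith⟩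

lemma dcInt_subset_dc (p : ℤ × (Fin d → ℤ)) : dcInt p ⊆ dc p := by
  intro x hx
  rw [mem_dc]
  intro i
  obtain ⟨h1, h2⟩ := mem_dcInt.1 hx i
  exact ⟨h1.le, h2.le⟩

lemma vol_dc (p : ℤ × (Fin d → ℤ)) :
    volume (dc p) = (ENNReal.ofReal ((2:ℝ)^p.1))^d := by
  rw [dc, cube, Real.volume_Icc_pi]
  simp

lemma vol_dcInt (p : ℤ × (Fin d → ℤ)) :
    volume (dcInt p) = (ENNReal.ofReal ((2:ℝ)^p.1))^d := by
  rw [dcInt, volume_pi_pi]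
  simp [Real.volume_Ioo]

lemma meas_dcInt (p : ℤ × (Fin d → ℤ)) : MeasurableSet (dcInt p) :=
  MeasurableSet.univ_pi fun _ => measurableSet_Ioo

lemma whitney_disjoint (hd : 0 < d) {K : Set (Fin d → ℝ)} {p q : ℤ × (Fin d → ℤ)}
    (hp : IsWhitneyFor K p) (hq : IsWhitneyFor K q) (hne : p ≠ q) :
    Disjoint (dcInt p) (dcInt q) := by
  rw [Set.disjoint_left]
  intro x hx hx'
  rcases le_total p.1 q.1 with h | h
  · have hsub := dc_subset_of_int_overlap h hx hx'
    have hne' : dc p ≠ dc q := fun he => hne (dc_inj hd he)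
    exact hp.2 q (hsub.ssubset_of_ne hne') hq.1
  · have hsub := dc_subset_of_int_overlap h hx' hx
    have hne' : dc q ≠ dc p := fun he => hne (dc_inj hd he).symm
    exact hq.2 p (hsub.ssubset_of_ne hne') hp.1

lemma packing (hd : 0 < d) (K : Set (Fin d → ℝ)) (Q : ℤ × (Fin d → ℤ)) :
    ∑' p : {p : ℤ × (Fin d → ℤ) // IsWhitneyFor K p ∧ dc p ⊆ dc Q}, volume (dc p.val)
      ≤ volume (dc Q \ K) := by
  have hcongr : ∀ p : {p : ℤ × (Fin d → ℤ) // IsWhitneyFor K p ∧ dc p ⊆ dc Q},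
      volume (dc p.val) = volume (dcInt p.val) := fun p => by rw [vol_dc, vol_dcInt]
  rw [tsum_congr hcongr,
    ← measure_iUnion
      (fun p q hne => whitney_disjoint hd p.2.1 q.2.1 (fun he => hne (Subtype.ext he)))
      (fun p => meas_dcInt _)]
  apply measure_mono
  apply iUnion_subset
  intro p
  rw [Set.subset_diff]
  exact ⟨(dcInt_subset_dc _).trans p.2.2,
    Set.disjoint_left.2 fun x hx hxK => (p.2.1.1.1 ((dcInt_subset_dc _) hx)) hxK⟩

lemma term_eq (d : ℕ) (α : ℝ) {m n : ℤ} (hmn : m ≤ n) :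
    ENNReal.ofReal (((2:ℝ)^m / (2:ℝ)^n) ^ ((d:ℝ) + α)) * (ENNReal.ofReal ((2:ℝ)^n))^d
      = (ENNReal.ofReal ((2:ℝ)^m))^d * (ENNReal.ofReal ((2:ℝ)^(-α)))^((n - m).toNat) := by
  rw [← ENNReal.ofReal_pow (by positivity : (0:ℝ) ≤ (2:ℝ)^n),
      ← ENNReal.ofReal_pow (by positivity : (0:ℝ) ≤ (2:ℝ)^m),
      ← ENNReal.ofReal_pow (by positivity : (0:ℝ) ≤ (2:ℝ)^(-α)),
      ← ENNReal.ofReal_mul (by positivity), ← ENNReal.ofReal_mul (by positivity)]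
  congr 1
  obtain ⟨k, hkk⟩ : ∃ k : ℕ, (k:ℤ) = n - m := ⟨(n-m).toNat, Int.toNat_of_nonneg (by omega)⟩
  have hdk : (n - m).toNat = k := by omega
  rw [hdk]
  have hkr : (k:ℝ) = (n:ℝ) - (m:ℝ) := by exact_mod_cast hkk
  have e1 : (2:ℝ)^m / (2:ℝ)^n = (2:ℝ) ^ (((m:ℝ)) - (n:ℝ)) := by
    rw [show ((m:ℝ) - (n:ℝ)) = (((m - n : ℤ)):ℝ) by push_cast; ring, Real.rpow_intCast,
      zpow_sub₀ (two_ne_zero)]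
  have e2 : (2:ℝ)^n = (2:ℝ) ^ ((n:ℝ)) := (Real.rpow_intCast 2 n).symm
  have e3 : (2:ℝ)^m = (2:ℝ) ^ ((m:ℝ)) := (Real.rpow_intCast 2 m).symm
  rw [e1, e2, e3,
    ← Real.rpow_natCast ((2:ℝ) ^ ((n:ℝ))) d, ← Real.rpow_natCast ((2:ℝ) ^ ((m:ℝ))) d,
    ← Real.rpow_natCast ((2:ℝ) ^ (-α)) k,
    ← Real.rpow_mul (by norm_num), ← Real.rpow_mul (by norm_num),
    ← Real.rpow_mul (by norm_num), ← Real.rpow_mul (by norm_num),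
    ← Real.rpow_add (by norm_num), ← Real.rpow_add (by norm_num)]
  congr 1
  rw [hkr]; ring

open Classical in
/-- The summand of the double sum, as a function on all pairs of indices. -/
noncomputable def gfun (d : ℕ) (α : ℝ) (K : Set (Fin d → ℝ)) (p₀ Q p : ℤ × (Fin d → ℤ)) :
    ℝ≥0∞ :=
  if dc Q ⊆ dc p₀ ∧ IsWhitneyFor K p ∧ dc p ⊆ dc Q then
    ENNReal.ofReal (((2:ℝ)^p.1 / (2:ℝ)^Q.1) ^ ((d:ℝ) + α)) * volume (dc Q)
  else 0

lemma tsum_ite {ι : Type*} (P : ι → Prop) [DecidablePred P] (f : ι → ℝ≥0∞) :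
    ∑' x : {i // P i}, f x.val = ∑' i, if P i then f i else 0 := by
  have h1 : Function.support (fun i => if P i then f i else 0) ⊆ {i | P i} := by
    intro i hi
    by_contra h
    exact hi (if_neg h)
  rw [← tsum_subtype_eq_of_support_subset h1]
  exact tsum_congr fun x => (if_pos x.2).symm

end WGS

/-- Geometric summability of Whitney cube sizes: `λ(Q) ≤ |Q \ K|/|Q| ≤ 1` for every dyadic
`Q ⊆ Q₀` and `Σ_{Q ⊆ Q₀} λ(Q)|Q| ≤ |Q₀ \ K|/(1 - 2^{-α})`. -/
theorem whitney_geometric_sum (d : ℕ) (hd : 0 < d) (α : ℝ) (hα : 0 < α)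
    (p₀ : ℤ × (Fin d → ℤ)) (K : Set (Fin d → ℝ)) (hK : IsCompact K) (hKQ : K ⊆ dc p₀) :
    (∀ Q : ℤ × (Fin d → ℤ), dc Q ⊆ dc p₀ →
      lamK K α Q ≤ volume (dc Q \ K) / volume (dc Q) ∧
        volume (dc Q \ K) / volume (dc Q) ≤ 1) ∧
    (∑' Q : {Q : ℤ × (Fin d → ℤ) // dc Q ⊆ dc p₀}, lamK K α Q.val * volume (dc Q.val))
      ≤ ENNReal.ofReal (1 / (1 - (2 : ℝ) ^ (-α))) * volume (dc p₀ \ K) := by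
  classical
  have h2 : ∀ n : ℤ, (0:ℝ) < (2:ℝ)^n := fun n => by positivity
  have hvol0 : ∀ p : ℤ × (Fin d → ℤ), volume (dc p) ≠ 0 := by
    intro p; rw [WGS.vol_dc]
    exact pow_ne_zero d (ne_of_gt (ENNReal.ofReal_pos.2 (h2 _)))
  have hvolt : ∀ p : ℤ × (Fin d → ℤ), volume (dc p) ≠ ⊤ := by
    intro p; rw [WGS.vol_dc]; exact ENNReal.pow_ne_top ENNReal.ofReal_ne_top
  -- termwise bound for part 1
  have hterm1 : ∀ (Q : ℤ × (Fin d → ℤ))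
      (p : {p : ℤ × (Fin d → ℤ) // IsWhitneyFor K p ∧ dc p ⊆ dc Q}),
      ENNReal.ofReal (((2:ℝ)^p.val.1 / (2:ℝ)^Q.1) ^ ((d:ℝ) + α)) * volume (dc Q)
        ≤ volume (dc p.val) := by
    intro Q p
    have hmn : p.val.1 ≤ Q.1 := WGS.scale_le hd p.2.2
    have hr0 : (0:ℝ) < (2:ℝ)^p.val.1 / (2:ℝ)^Q.1 := by positivity
    have hr1 : (2:ℝ)^p.val.1 / (2:ℝ)^Q.1 ≤ 1 := by
      rw [div_le_one (h2 _)]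
      exact (zpow_le_zpow_iff_right₀ (by norm_num : (1:ℝ) < 2)).2 hmn
    calc ENNReal.ofReal (((2:ℝ)^p.val.1 / (2:ℝ)^Q.1) ^ ((d:ℝ) + α)) * volume (dc Q)
        ≤ ENNReal.ofReal (((2:ℝ)^p.val.1 / (2:ℝ)^Q.1) ^ ((d:ℝ) + (0:ℝ))) * volume (dc Q) := by
          refine mul_le_mul_left (ENNReal.ofReal_le_ofReal ?_) _
          exact Real.rpow_le_rpow_of_exponent_ge hr0 hr1 (by linarith)
      _ = volume (dc p.val) := by
          rw [WGS.vol_dc Q, WGS.term_eq d 0 hmn, WGS.vol_dc p.val]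
          simp
  constructor
  · intro Q hQ
    constructor
    · rw [ENNReal.le_div_iff_mul_le (Or.inl (hvol0 Q)) (Or.inl (hvolt Q))]
      rw [lamK, ← ENNReal.tsum_mul_right]
      exact le_trans (ENNReal.tsum_le_tsum (hterm1 Q)) (WGS.packing hd K Q)
    · exact ENNReal.div_le_of_le_mul (by rw [one_mul]; exact measure_mono diff_subset)
  · -- part 2
    set c : ℝ≥0∞ := ENNReal.ofReal ((2:ℝ)^(-α)) with hc
    have hx1 : (2:ℝ)^(-α) < 1 :=
      Real.rpow_lt_one_of_one_lt_of_neg (by norm_num) (neg_lt_zero.2 hα)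
    have hx0 : (0:ℝ) < (2:ℝ)^(-α) := Real.rpow_pos_of_pos (by norm_num) _
    have hconst : ENNReal.ofReal (1 / (1 - (2:ℝ)^(-α))) = (1 - c)⁻¹ := by
      rw [one_div, ENNReal.ofReal_inv_of_pos (by linarith), ENNReal.ofReal_sub _ hx0.le,
        ENNReal.ofReal_one]
    have stepA : (∑' Q : {Q : ℤ × (Fin d → ℤ) // dc Q ⊆ dc p₀},
        lamK K α Q.val * volume (dc Q.val)) = ∑' Q, ∑' p, WGS.gfun d α K p₀ Q p := by
      refine (WGS.tsum_ite (fun Q : ℤ × (Fin d → ℤ) => dc Q ⊆ dc p₀)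
        (fun Q => lamK K α Q * volume (dc Q))).trans (tsum_congr fun Q => ?_)
      by_cases hQ : dc Q ⊆ dc p₀
      · rw [if_pos hQ]
        calc lamK K α Q * volume (dc Q)
            = ∑' p : {p : ℤ × (Fin d → ℤ) // IsWhitneyFor K p ∧ dc p ⊆ dc Q},
                ENNReal.ofReal (((2:ℝ)^p.val.1 / (2:ℝ)^Q.1) ^ ((d:ℝ) + α))
                  * volume (dc Q) := by
              rw [lamK, ← ENNReal.tsum_mul_right]
          _ = ∑' p : ℤ × (Fin d → ℤ),
                (if IsWhitneyFor K p ∧ dc p ⊆ dc Q then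
                  ENNReal.ofReal (((2:ℝ)^p.1 / (2:ℝ)^Q.1) ^ ((d:ℝ) + α)) * volume (dc Q)
                 else 0) :=
              WGS.tsum_ite (fun p : ℤ × (Fin d → ℤ) => IsWhitneyFor K p ∧ dc p ⊆ dc Q)
                (fun p => ENNReal.ofReal (((2:ℝ)^p.1 / (2:ℝ)^Q.1) ^ ((d:ℝ) + α))
                  * volume (dc Q))
          _ = ∑' p, WGS.gfun d α K p₀ Q p := by
              refine tsum_congr fun p => ?_
              by_cases hp : IsWhitneyFor K p ∧ dc p ⊆ dc Q
              · simp only [WGS.gfun]; rw [if_pos hp, if_pos ⟨hQ, hp⟩]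
              · simp only [WGS.gfun]; rw [if_neg hp, if_neg (fun h => hp ⟨h.2.1, h.2.2⟩)]
      · rw [if_neg hQ]
        symm
        refine ENNReal.tsum_eq_zero.2 fun p => ?_
        simp only [WGS.gfun]
        rw [if_neg (fun h => hQ h.1)]
    have stepC : ∀ p : ℤ × (Fin d → ℤ), (∑' Q, WGS.gfun d α K p₀ Q p)
        ≤ if IsWhitneyFor K p ∧ dc p ⊆ dc p₀ then (1 - c)⁻¹ * volume (dc p) else 0 := by
      intro p
      by_cases hw : IsWhitneyFor K p ∧ dc p ⊆ dc p₀
      · rw [if_pos hw]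
        have hsupp : Function.support (fun Q => WGS.gfun d α K p₀ Q p)
            ⊆ {Q : ℤ × (Fin d → ℤ) | dc p ⊆ dc Q} := by
          intro Q hQ
          by_contra h
          refine hQ ?_
          show WGS.gfun d α K p₀ Q p = 0
          simp only [WGS.gfun]
          rw [if_neg (fun hh => h hh.2.2)]
        rw [← tsum_subtype_eq_of_support_subset hsupp]
        have key : ∀ Q : {Q : ℤ × (Fin d → ℤ) | dc p ⊆ dc Q},
            WGS.gfun d α K p₀ Q.val p
              ≤ (fun k : ℕ => volume (dc p) * c ^ k) ((Q.val.1 - p.1).toNat) := by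
          intro Q
          simp only [WGS.gfun]
          by_cases hQ : dc Q.val ⊆ dc p₀ ∧ IsWhitneyFor K p ∧ dc p ⊆ dc Q.val
          · rw [if_pos hQ]
            have hmn : p.1 ≤ Q.val.1 := WGS.scale_le hd hQ.2.2
            rw [WGS.vol_dc Q.val, WGS.term_eq d α hmn, WGS.vol_dc p]
          · rw [if_neg hQ]; exact zero_le
        refine le_trans (ENNReal.tsum_le_tsum key) ?_
        refine le_trans (ENNReal.tsum_comp_le_tsum_of_injective ?_
          (fun k : ℕ => volume (dc p) * c ^ k)) ?_
        · intro Q Q' hQQ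
          have h1 : p.1 ≤ Q.val.1 := WGS.scale_le hd Q.2
          have h2' : p.1 ≤ Q'.val.1 := WGS.scale_le hd Q'.2
          have : Q.val.1 = Q'.val.1 := by
            simp only at hQQ
            omega
          exact Subtype.ext (WGS.same_scale_eq Q.2 Q'.2 this)
        · rw [ENNReal.tsum_mul_left, ENNReal.tsum_geometric, mul_comm]
      · rw [if_neg hw]
        refine le_of_eq (ENNReal.tsum_eq_zero.2 fun Q => ?_)
        simp only [WGS.gfun]
        rw [if_neg]
        rintro ⟨h1, h2', h3⟩
        exact hw ⟨h2', h3.trans h1⟩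
    calc (∑' Q : {Q : ℤ × (Fin d → ℤ) // dc Q ⊆ dc p₀}, lamK K α Q.val * volume (dc Q.val))
        = ∑' Q, ∑' p, WGS.gfun d α K p₀ Q p := stepA
      _ = ∑' p, ∑' Q, WGS.gfun d α K p₀ Q p := ENNReal.tsum_comm
      _ ≤ ∑' p : ℤ × (Fin d → ℤ),
            (if IsWhitneyFor K p ∧ dc p ⊆ dc p₀ then (1 - c)⁻¹ * volume (dc p) else 0) :=
          ENNReal.tsum_le_tsum stepC
      _ = (1 - c)⁻¹ * ∑' p : ℤ × (Fin d → ℤ),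
            (if IsWhitneyFor K p ∧ dc p ⊆ dc p₀ then volume (dc p) else 0) := by
          rw [← ENNReal.tsum_mul_left]
          exact tsum_congr fun p => by split <;> simp
      _ ≤ (1 - c)⁻¹ * volume (dc p₀ \ K) := by
          refine mul_le_mul_right ?_ _
          refine le_trans (le_of_eq ?_) (WGS.packing hd K p₀)
          exact (WGS.tsum_ite (fun p : ℤ × (Fin d → ℤ) => IsWhitneyFor K p ∧ dc p ⊆ dc p₀)
            (fun p => volume (dc p))).symm
      _ = ENNReal.ofReal (1 / (1 - (2:ℝ)^(-α))) * volume (dc p₀ \ K) := by rw [hconst]
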